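/- Fix a real number p > 1 and set λ_{n,k} = (1/n³)(1 + k/n^p) for integers n ≥ 1 and 0 ≤ k ≤ n−1. Let (w_m)_{m ≥ 1} be any orthonormal (Hilbert) basis of L²(ℝ) and define h_{n,k} = (1/√n) ∑_{l=0}^{n−1} ( cos(2πkl/n) + sin(2πkl/n) ) w_{n(n−1)/2 + l + 1}. Then: (a) the family of rank-one operators ( λ_{n,k} (h_{n,k} ⊗ h̄_{n,k}) )_{n ≥ 1, 0 ≤ k ≤ n−1} is summable in operator norm on L²(ℝ), with ∑_{n=1}^∞ ∑_{k=0}^{n−1} λ_{n,k} < ∞, and its sum T is a positive semi-definite self-adjoint bounded operator; but (b) the family of nonnegative numbers ( λ_{n,k} · ( ∑_{m=1}^∞ |⟨h_{n,k}, w_m⟩| )² )_{n ≥ 1, 0 ≤ k ≤ n−1} is NOT summable: ∑_{n=1}^∞ ∑_{k=0}^{n−1} λ_{n,k} ( ∑_{m} |⟨h_{n,k}, w_m⟩| )² = ∞. -/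

import Mathlib

open scoped BigOperators ENNReal ComplexOrder InnerProductSpace
open MeasureTheory

/-- The complex Hilbert space `L²(ℝ)`. -/
noncomputable abbrev L2R : Type := Lp ℂ 2 (volume : Measure ℝ)

/-- Given vectors `(w_m)` (indexed by `ℕ`, with `w m` playing the role of `w_{m+1}`), the vector
`h_{n,k} = (1/√n) ∑_{l=0}^{n-1} (cos(2πkl/n) + sin(2πkl/n)) w_{n(n-1)/2 + l + 1} ∈ L²(ℝ)`. -/
noncomputable def hvec (w : ℕ → L2R) (n k : ℕ) : L2R :=
  ((1 / Real.sqrt n : ℝ) : ℂ) • ∑ l ∈ Finset.range n,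
    ((Real.cos (2 * Real.pi * k * l / n) + Real.sin (2 * Real.pi * k * l / n) : ℝ) : ℂ) •
      w (n * (n - 1) / 2 + l)

/-- The eigenvalue `λ_{n,k} = (1/n³)(1 + k/nᵖ)`. -/
noncomputable def lam (p : ℝ) (n k : ℕ) : ℝ := (1 / (n : ℝ) ^ 3) * (1 + (k : ℝ) / (n : ℝ) ^ p)

/-- The rank-one operator `v ⊗ v̄ : f ↦ ⟨f, v⟩ v` (with `⟨f, v⟩ = ∫ f conj v`). -/
noncomputable def rankOneC {H : Type*} [NormedAddCommGroup H] [InnerProductSpace ℂ H]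
    (v : H) : H →L[ℂ] H := (innerSL ℂ v).smulRight v


open Finset

lemma sin_sum_zero (n m : ℕ) (hn : 0 < n) :
    ∑ l ∈ range n, Real.sin (2 * Real.pi * m * l / n) = 0 := by
  have key : ∀ l : ℕ, Real.sin (2 * Real.pi * m * l / n)
      = (Complex.exp ((2 * Real.pi * m / n) * Complex.I) ^ l).im := by
    intro l
    rw [← Complex.exp_nat_mul]
    have : (l : ℂ) * (2 * Real.pi * m / n * Complex.I)
        = ((2 * Real.pi * m * l / n : ℝ) : ℂ) * Complex.I := by
      push_cast; ring
    rw [this, Complex.exp_ofReal_mul_I_im]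
  simp_rw [key]
  rw [← Complex.im_sum]
  set x : ℂ := Complex.exp ((2 * Real.pi * m / n) * Complex.I) with hx
  have hxn : x ^ n = 1 := by
    rw [← Complex.exp_nat_mul]
    have : (n : ℂ) * (2 * Real.pi * m / n * Complex.I) = (m : ℂ) * (2 * Real.pi * Complex.I) := by
      have hn' : (n : ℂ) ≠ 0 := Nat.cast_ne_zero.mpr hn.ne'
      field_simp
    rw [this, Complex.exp_nat_mul_two_pi_mul_I]
  by_cases h1 : x = 1
  · simp [h1]
  · rw [geom_sum_eq h1, hxn]
    simp

noncomputable def cc (n k l : ℕ) : ℝ :=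
  Real.cos (2 * Real.pi * k * l / n) + Real.sin (2 * Real.pi * k * l / n)

lemma cc_sq (n k l : ℕ) : (cc n k l) ^ 2 = 1 + Real.sin (2 * Real.pi * (2 * k) * l / n) := by
  have h2 : (2 * Real.pi * (2 * k) * l / n) = 2 * (2 * Real.pi * k * l / n) := by ring
  rw [h2, Real.sin_two_mul, cc]
  set x := 2 * Real.pi * (k:ℝ) * l / n with hxdef
  have := Real.sin_sq_add_cos_sq x
  nlinarith [this]

lemma cc_sum_sq (n k : ℕ) (hn : 0 < n) : ∑ l ∈ range n, (cc n k l) ^ 2 = n := by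
  simp_rw [cc_sq]
  have h0 := sin_sum_zero n (2 * k) hn
  push_cast at h0
  rw [Finset.sum_add_distrib, h0]
  simp

lemma cc_abs_le (n k l : ℕ) : |cc n k l| ≤ Real.sqrt 2 := by
  have h1 : (cc n k l) ^ 2 ≤ 2 := by
    rw [cc_sq]
    have := Real.sin_le_one (2 * Real.pi * (2 * (k:ℝ)) * l / n)
    push_cast
    linarith
  calc |cc n k l| = Real.sqrt ((cc n k l) ^ 2) := (Real.sqrt_sq_eq_abs _).symm
    _ ≤ Real.sqrt 2 := Real.sqrt_le_sqrt h1

lemma cc_sum_abs_ge (n k : ℕ) (hn : 0 < n) :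
    (n : ℝ) / Real.sqrt 2 ≤ ∑ l ∈ range n, |cc n k l| := by
  have h1 : (n : ℝ) ≤ Real.sqrt 2 * ∑ l ∈ range n, |cc n k l| := by
    rw [Finset.mul_sum, ← cc_sum_sq n k hn]
    apply Finset.sum_le_sum
    intro l _
    calc (cc n k l) ^ 2 = |cc n k l| * |cc n k l| := by rw [← abs_mul, abs_mul_self]; ring
      _ ≤ Real.sqrt 2 * |cc n k l| := by
          apply mul_le_mul_of_nonneg_right (cc_abs_le n k l) (abs_nonneg _)
  rw [div_le_iff₀ (by positivity)]
  linarith [h1]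

lemma hvec_eq (w : ℕ → L2R) (n k : ℕ) :
    hvec w n k = ((1 / Real.sqrt n : ℝ) : ℂ) • ∑ l ∈ Finset.range n,
      ((cc n k l : ℝ) : ℂ) • w (n * (n - 1) / 2 + l) := rfl

lemma inner_hvec (w : HilbertBasis ℕ ℂ L2R) (n k m : ℕ) :
    ⟪hvec (fun m => w m) n k, w m⟫_ℂ
      = ((1 / Real.sqrt n : ℝ) : ℂ) *
        (if m ∈ Finset.Ico (n * (n - 1) / 2) (n * (n - 1) / 2 + n)
          then ((cc n k (m - n * (n - 1) / 2) : ℝ) : ℂ) else 0) := by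
  set b := n * (n - 1) / 2 with hb
  rw [hvec_eq, inner_smul_left, sum_inner]
  have horth := w.orthonormal
  rw [orthonormal_iff_ite] at horth
  congr 1
  · simp
  have hterm : ∀ l, ⟪((cc n k l : ℝ) : ℂ) • w (b + l), w m⟫_ℂ
      = ((cc n k l : ℝ) : ℂ) * (if b + l = m then 1 else 0) := by
    intro l
    rw [inner_smul_left, horth]
    simp
  simp_rw [← hb, hterm]
  by_cases hm : m ∈ Finset.Ico b (b + n)
  · rw [if_pos hm]
    rw [Finset.mem_Ico] at hm
    rw [Finset.sum_eq_single (m - b)]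
    · rw [if_pos (by omega), mul_one]
    · intro l hl hne
      rw [if_neg (by omega), mul_zero]
    · intro h
      exact absurd (Finset.mem_range.mpr (by omega)) h
  · rw [if_neg hm]
    rw [Finset.mem_Ico] at hm
    apply Finset.sum_eq_zero
    intro l hl
    rw [Finset.mem_range] at hl
    rw [if_neg (by omega), mul_zero]

lemma norm_hvec (w : HilbertBasis ℕ ℂ L2R) (n k : ℕ) (hn : 0 < n) :
    ‖hvec (fun m => w m) n k‖ = 1 := by
  set b := n * (n - 1) / 2 with hb
  have horth : Orthonormal ℂ (fun l : ℕ => w (b + l)) :=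
    w.orthonormal.comp _ (add_right_injective b)
  set u : L2R := ∑ l ∈ Finset.range n, ((cc n k l : ℝ) : ℂ) • w (b + l) with hu
  have h1 : ⟪u, u⟫_ℂ = ∑ l ∈ Finset.range n, (starRingEnd ℂ) ((cc n k l : ℝ) : ℂ) * ((cc n k l : ℝ) : ℂ) :=
    horth.inner_sum _ _ _
  have h2 : ‖u‖ ^ 2 = (n : ℝ) := by
    have := inner_self_eq_norm_sq (𝕜 := ℂ) u
    rw [← this, h1]
    rw [← cc_sum_sq n k hn]
    rw [map_sum]
    apply Finset.sum_congr rfl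
    intro l _
    simp [Complex.conj_ofReal, ← Complex.ofReal_mul, sq]
  have h3 : ‖u‖ = Real.sqrt n := by
    rw [← Real.sqrt_sq (norm_nonneg u), h2]
  rw [hvec_eq, norm_smul, h3]
  have hsn : Real.sqrt n ≠ 0 :=
    (Real.sqrt_pos.mpr (by exact_mod_cast hn)).ne' 
  rw [Complex.norm_real]
  rw [Real.norm_eq_abs, abs_of_nonneg (by positivity)]
  field_simp

lemma tsum_inner_eq (w : HilbertBasis ℕ ℂ L2R) (n k : ℕ) (hn : 0 < n) :
    ∑' m : ℕ, ‖⟪hvec (fun m => w m) n k, w m⟫_ℂ‖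
      = (1 / Real.sqrt n) * ∑ l ∈ Finset.range n, |cc n k l| := by
  set b := n * (n - 1) / 2 with hb
  have hf : ∀ m : ℕ, ‖⟪hvec (fun m => w m) n k, w m⟫_ℂ‖
      = if m ∈ Finset.Ico b (b + n) then (1 / Real.sqrt n) * |cc n k (m - b)| else 0 := by
    intro m
    rw [inner_hvec]
    by_cases hm : m ∈ Finset.Ico b (b + n)
    · rw [if_pos hm, if_pos hm, norm_mul, Complex.norm_real, Complex.norm_real,
        Real.norm_eq_abs, Real.norm_eq_abs, abs_of_nonneg (by positivity)]
    · rw [if_neg hm, if_neg hm, mul_zero, norm_zero]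
  simp_rw [hf]
  rw [tsum_eq_sum (s := Finset.Ico b (b + n)) (by intro m hm; rw [if_neg hm])]
  rw [Finset.sum_ite_of_true (by intro m hm; exact hm), ← Finset.mul_sum]
  congr 1
  rw [Finset.sum_Ico_eq_sum_range]
  simp

lemma tsum_inner_sq_ge (w : HilbertBasis ℕ ℂ L2R) (n k : ℕ) (hn : 0 < n) :
    (n : ℝ) / 2 ≤ (∑' m : ℕ, ‖⟪hvec (fun m => w m) n k, w m⟫_ℂ‖) ^ 2 := by
  have h1 : Real.sqrt n / Real.sqrt 2 ≤ ∑' m : ℕ, ‖⟪hvec (fun m => w m) n k, w m⟫_ℂ‖ := by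
    rw [tsum_inner_eq w n k hn]
    have h2 := cc_sum_abs_ge n k hn
    have hd : (1 / Real.sqrt n) * (n:ℝ) = Real.sqrt n := by
      rw [one_div, inv_mul_eq_div, Real.div_sqrt]
    calc Real.sqrt n / Real.sqrt 2 = ((1 / Real.sqrt n) * (n:ℝ)) / Real.sqrt 2 := by rw [hd]
      _ = (1 / Real.sqrt n) * ((n:ℝ) / Real.sqrt 2) := mul_div_assoc _ _ _
      _ ≤ (1 / Real.sqrt n) * ∑ l ∈ Finset.range n, |cc n k l| := by
          apply mul_le_mul_of_nonneg_left h2 (by positivity)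
  calc (n:ℝ)/2 = (Real.sqrt n / Real.sqrt 2)^2 := by
        rw [div_pow, Real.sq_sqrt (by positivity : (0:ℝ) ≤ (n:ℝ)),
          Real.sq_sqrt (by norm_num : (0:ℝ) ≤ 2)]
    _ ≤ _ := by
        apply pow_le_pow_left₀ (by positivity) h1 2

lemma lam_nonneg (p : ℝ) (n k : ℕ) : 0 ≤ lam p n k := by
  unfold lam; positivity

lemma lam_ge (p : ℝ) (n k : ℕ) : 1 / (n:ℝ)^3 ≤ lam p n k := by
  unfold lam
  nth_rewrite 1 [← mul_one (1 / (n:ℝ)^3)]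
  apply mul_le_mul_of_nonneg_left _ (by positivity)
  have : (0:ℝ) ≤ (k:ℝ) / (n:ℝ)^p := by positivity
  linarith

lemma lam_le (p : ℝ) (hp : 1 ≤ p) (n k : ℕ) (hn : 0 < n) (hk : k ≤ n) :
    lam p n k ≤ 2 / (n:ℝ)^3 := by
  unfold lam
  have hn1 : (1:ℝ) ≤ (n:ℝ) := by exact_mod_cast hn
  have hpow : (n:ℝ) ≤ (n:ℝ)^p := by
    calc (n:ℝ) = (n:ℝ)^(1:ℝ) := (Real.rpow_one _).symm
      _ ≤ (n:ℝ)^p := Real.rpow_le_rpow_of_exponent_le hn1 hp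
  have hdiv : (k:ℝ) / (n:ℝ)^p ≤ 1 := by
    rw [div_le_one (by positivity)]
    calc (k:ℝ) ≤ (n:ℝ) := by exact_mod_cast hk
      _ ≤ _ := hpow
  rw [div_eq_mul_one_div 2 ((n:ℝ)^3), mul_comm 2 (1 / (n:ℝ)^3)]
  apply mul_le_mul_of_nonneg_left (by linarith) (by positivity)

set_option maxHeartbeats 1000000 in
lemma lam_summable (p : ℝ) (hp : 1 < p) :
    Summable (fun i : Σ n : ℕ, Fin (n + 1) => lam p (i.1 + 1) (i.2 : ℕ)) := by
  rw [summable_sigma_of_nonneg (fun i => lam_nonneg p _ _)]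
  constructor
  · intro n
    exact Summable.of_finite (f := fun k : Fin (n+1) => lam p (n + 1) (k : ℕ))
  · refine Summable.of_nonneg_of_le (f := fun n : ℕ => 2 / ((n:ℝ)+1)^2)
      (fun n => tsum_nonneg (fun k => lam_nonneg p _ _)) ?_ ?_
    · intro n
      rw [tsum_fintype]
      calc ∑ k : Fin (n+1), lam p (n+1) (k : ℕ)
          ≤ ∑ _k : Fin (n+1), 2 / ((n:ℝ)+1)^3 := by
            apply Finset.sum_le_sum
            intro k _
            have := lam_le p hp.le (n+1) k (Nat.succ_pos n) (by omega)
            push_cast at this ⊢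
            convert this using 2
        _ = 2 / ((n:ℝ)+1)^2 := by
            rw [Finset.sum_const, Finset.card_univ, Fintype.card_fin, nsmul_eq_mul]
            have h0 : ((n:ℝ)+1) ≠ 0 := by positivity
            push_cast
            field_simp
    · have h2 : Summable (fun n : ℕ => 1 / ((n:ℝ))^2) :=
        Real.summable_one_div_nat_pow.mpr (by norm_num)
      have h3 : Summable (fun n : ℕ => 2 * (1/((n+1:ℕ):ℝ)^2)) :=
        (((summable_nat_add_iff 1).mpr h2)).mul_left 2
      apply h3.congr
      intro n
      push_cast
      ring

lemma rankOne_norm {H : Type*} [NormedAddCommGroup H] [InnerProductSpace ℂ H] (v : H) :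
    ‖rankOneC v‖ = ‖v‖ * ‖v‖ := by
  rw [rankOneC, ContinuousLinearMap.norm_smulRight_apply, innerSL_apply_norm]

lemma op_norm_eq (p : ℝ) (w : HilbertBasis ℕ ℂ L2R) (i : Σ n : ℕ, Fin (n + 1)) :
    ‖((lam p (i.1 + 1) (i.2 : ℕ) : ℝ) : ℂ) •
        rankOneC (hvec (fun m => w m) (i.1 + 1) (i.2 : ℕ))‖ = lam p (i.1 + 1) (i.2 : ℕ) := by
  rw [norm_smul, rankOne_norm, norm_hvec w _ _ (Nat.succ_pos i.1), Complex.norm_real,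
    Real.norm_eq_abs, abs_of_nonneg (lam_nonneg p _ _)]
  ring

lemma op_summable (p : ℝ) (hp : 1 < p) (w : HilbertBasis ℕ ℂ L2R) :
    Summable (fun i : Σ n : ℕ, Fin (n + 1) =>
      ((lam p (i.1 + 1) (i.2 : ℕ) : ℝ) : ℂ) •
        rankOneC (hvec (fun m => w m) (i.1 + 1) (i.2 : ℕ))) := by
  apply Summable.of_norm
  apply ((lam_summable p hp).congr (fun i => (op_norm_eq p w i).symm))

lemma term_inner (lamr : ℝ) (v x y : L2R) :
    ⟪x, ((lamr : ℂ) • rankOneC v) y⟫_ℂ = (lamr : ℂ) * (⟪v, y⟫_ℂ * ⟪x, v⟫_ℂ) := by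
  simp [rankOneC, inner_smul_right, ContinuousLinearMap.smul_apply,
    ContinuousLinearMap.smulRight_apply, innerSL_apply_apply, -Complex.coe_smul]

lemma term_symm (lamr : ℝ) (v x y : L2R) :
    ⟪((lamr : ℂ) • rankOneC v) x, y⟫_ℂ = ⟪x, ((lamr : ℂ) • rankOneC v) y⟫_ℂ := by
  rw [term_inner]
  simp only [rankOneC, ContinuousLinearMap.smul_apply, ContinuousLinearMap.smulRight_apply,
    innerSL_apply_apply, inner_smul_left, Complex.conj_ofReal, map_mul]
  rw [inner_conj_symm]
  ring

lemma part_c (p : ℝ) (w : HilbertBasis ℕ ℂ L2R) (T : L2R →L[ℂ] L2R)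
    (hT : HasSum (fun i : Σ n : ℕ, Fin (n + 1) =>
          ((lam p (i.1 + 1) (i.2 : ℕ) : ℝ) : ℂ) •
            rankOneC (hvec (fun m => w m) (i.1 + 1) (i.2 : ℕ))) T) :
    IsSelfAdjoint T ∧ ∀ f : L2R, 0 ≤ (⟪f, T f⟫_ℂ) := by
  set A := fun i : Σ n : ℕ, Fin (n + 1) =>
      ((lam p (i.1 + 1) (i.2 : ℕ) : ℝ) : ℂ) •
        rankOneC (hvec (fun m => w m) (i.1 + 1) (i.2 : ℕ)) with hA
  have happ : ∀ x : L2R, HasSum (fun i => A i x) (T x) := fun x =>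
    hT.mapL ((ContinuousLinearMap.apply ℂ L2R) x)
  have hinner : ∀ x y : L2R, HasSum (fun i => ⟪y, A i x⟫_ℂ) ⟪y, T x⟫_ℂ := fun x y =>
    (happ x).mapL (innerSL ℂ y)
  constructor
  · rw [ContinuousLinearMap.isSelfAdjoint_iff_isSymmetric]
    intro x y
    have h1 : HasSum (fun i => (starRingEnd ℂ) ⟪y, A i x⟫_ℂ) ((starRingEnd ℂ) ⟪y, T x⟫_ℂ) :=
      (hinner x y).star
    have h2 : (fun i => (starRingEnd ℂ) ⟪y, A i x⟫_ℂ) = fun i => ⟪x, A i y⟫_ℂ := by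
      funext i
      rw [inner_conj_symm, hA, term_symm]
    rw [h2] at h1
    have h3 := h1.unique (hinner y x)
    calc ⟪(T : L2R →ₗ[ℂ] L2R) x, y⟫_ℂ = (starRingEnd ℂ) ⟪y, T x⟫_ℂ := (inner_conj_symm _ _).symm
      _ = ⟪x, T y⟫_ℂ := h3
      _ = ⟪(x : L2R), (T : L2R →ₗ[ℂ] L2R) y⟫_ℂ := rfl
  · intro f
    set r : (Σ n : ℕ, Fin (n + 1)) → ℝ := fun i =>
      lam p (i.1 + 1) (i.2 : ℕ) * ‖⟪hvec (fun m => w m) (i.1 + 1) (i.2 : ℕ), f⟫_ℂ‖ ^ 2 with hr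
    have hterm : ∀ i, ⟪f, A i f⟫_ℂ = ((r i : ℝ) : ℂ) := by
      intro i
      rw [hA, term_inner]
      set v := hvec (fun m => w m) (i.1 + 1) (i.2 : ℕ)
      rw [← inner_conj_symm v f, mul_comm ((starRingEnd ℂ) ⟪f, v⟫_ℂ) ⟪f, v⟫_ℂ, Complex.mul_conj]
      rw [hr]
      push_cast [Complex.normSq_eq_norm_sq]
      have habs : ‖⟪f, v⟫_ℂ‖ = ‖⟪v, f⟫_ℂ‖ := by
        exact norm_inner_symm f v
      rw [habs]
    have h4 : HasSum (fun i => ((r i : ℝ) : ℂ)) ⟪f, T f⟫_ℂ := by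
      have := hinner f f
      simp_rw [hterm] at this
      exact this
    have hre : HasSum r (⟪f, T f⟫_ℂ).re := by
      have := h4.mapL Complex.reCLM
      simpa using this
    have him : HasSum (fun _ : Σ n : ℕ, Fin (n + 1) => (0:ℝ)) (⟪f, T f⟫_ℂ).im := by
      have := h4.mapL Complex.imCLM
      simpa using this
    rw [Complex.le_def]
    constructor
    · rw [Complex.zero_re, ← hre.tsum_eq]
      exact tsum_nonneg (fun i => mul_nonneg (lam_nonneg p _ _) (by positivity))
    · rw [Complex.zero_im]
      exact hasSum_zero.unique him

lemma F_nonneg (p : ℝ) (w : HilbertBasis ℕ ℂ L2R) (i : Σ n : ℕ, Fin (n + 1)) :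
    0 ≤ lam p (i.1 + 1) (i.2 : ℕ) *
      (∑' m : ℕ, ‖⟪hvec (fun m => w m) (i.1 + 1) (i.2 : ℕ), w m⟫_ℂ‖) ^ 2 :=
  mul_nonneg (lam_nonneg p _ _) (by positivity)

lemma F_lb (p : ℝ) (w : HilbertBasis ℕ ℂ L2R) (i : Σ n : ℕ, Fin (n + 1)) :
    1 / (2 * ((i.1:ℝ) + 1) ^ 2) ≤ lam p (i.1 + 1) (i.2 : ℕ) *
      (∑' m : ℕ, ‖⟪hvec (fun m => w m) (i.1 + 1) (i.2 : ℕ), w m⟫_ℂ‖) ^ 2 := by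
  have hn : 0 < i.1 + 1 := Nat.succ_pos _
  have h1 := lam_ge p (i.1 + 1) (i.2 : ℕ)
  have h2 := tsum_inner_sq_ge w (i.1 + 1) (i.2 : ℕ) hn
  have h3 : (1 / ((i.1+1:ℕ):ℝ)^3) * (((i.1+1:ℕ):ℝ) / 2)
      ≤ lam p (i.1 + 1) (i.2 : ℕ) *
        (∑' m : ℕ, ‖⟪hvec (fun m => w m) (i.1 + 1) (i.2 : ℕ), w m⟫_ℂ‖) ^ 2 :=
    mul_le_mul h1 h2 (by positivity) (lam_nonneg p _ _)
  calc 1 / (2 * ((i.1:ℝ) + 1) ^ 2) = (1 / ((i.1+1:ℕ):ℝ)^3) * (((i.1+1:ℕ):ℝ) / 2) := by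
        push_cast
        have : ((i.1:ℝ) + 1) ≠ 0 := by positivity
        field_simp
    _ ≤ _ := h3

lemma not_summable_shifted_harmonic : ¬ Summable (fun n : ℕ => 1 / (2 * ((n:ℝ) + 1))) := by
  intro h
  have h2 : Summable (fun n : ℕ => 1 / (((n+1:ℕ)):ℝ)) := by
    have := h.mul_left 2
    apply this.congr
    intro n
    push_cast
    have : ((n:ℝ) + 1) ≠ 0 := by positivity
    field_simp
  exact Real.not_summable_one_div_natCast ((summable_nat_add_iff 1).mp h2)

lemma not_summable_F (p : ℝ) (w : HilbertBasis ℕ ℂ L2R) :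
    ¬ Summable (fun i : Σ n : ℕ, Fin (n + 1) =>
        lam p (i.1 + 1) (i.2 : ℕ) *
          (∑' m : ℕ, ‖⟪hvec (fun m => w m) (i.1 + 1) (i.2 : ℕ), w m⟫_ℂ‖) ^ 2) := by
  intro h
  rw [summable_sigma_of_nonneg (fun i => F_nonneg p w i)] at h
  obtain ⟨-, h2⟩ := h
  apply not_summable_shifted_harmonic
  apply Summable.of_nonneg_of_le (fun n => by positivity) _ h2
  intro n
  rw [tsum_fintype]
  calc (1:ℝ) / (2 * ((n:ℝ) + 1))
      = ∑ _k : Fin (n+1), 1 / (2 * ((n:ℝ) + 1)^2) := by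
        rw [Finset.sum_const, Finset.card_univ, Fintype.card_fin, nsmul_eq_mul]
        have : ((n:ℝ) + 1) ≠ 0 := by positivity
        push_cast
        field_simp
    _ ≤ ∑ k : Fin (n+1), lam p (n+1) (k : ℕ) *
          (∑' m : ℕ, ‖⟪hvec (fun m => w m) (n + 1) (k : ℕ), w m⟫_ℂ‖) ^ 2 := by
        apply Finset.sum_le_sum
        intro k _
        exact F_lb p w ⟨n, k⟩

theorem feichtinger_counterexample (p : ℝ) (hp : 1 < p) (w : HilbertBasis ℕ ℂ L2R) :
    Summable (fun i : Σ n : ℕ, Fin (n + 1) => lam p (i.1 + 1) (i.2 : ℕ)) ∧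
    Summable (fun i : Σ n : ℕ, Fin (n + 1) =>
      ((lam p (i.1 + 1) (i.2 : ℕ) : ℝ) : ℂ) •
        rankOneC (hvec (fun m => w m) (i.1 + 1) (i.2 : ℕ))) ∧
    (∀ T : L2R →L[ℂ] L2R,
      HasSum (fun i : Σ n : ℕ, Fin (n + 1) =>
          ((lam p (i.1 + 1) (i.2 : ℕ) : ℝ) : ℂ) •
            rankOneC (hvec (fun m => w m) (i.1 + 1) (i.2 : ℕ))) T →
        IsSelfAdjoint T ∧ ∀ f : L2R, 0 ≤ (⟪f, T f⟫_ℂ)) ∧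
    ¬ Summable (fun i : Σ n : ℕ, Fin (n + 1) =>
        lam p (i.1 + 1) (i.2 : ℕ) *
          (∑' m : ℕ, ‖⟪hvec (fun m => w m) (i.1 + 1) (i.2 : ℕ), w m⟫_ℂ‖) ^ 2) ∧
    ∑' i : Σ n : ℕ, Fin (n + 1), ENNReal.ofReal
        (lam p (i.1 + 1) (i.2 : ℕ) *
          (∑' m : ℕ, ‖⟪hvec (fun m => w m) (i.1 + 1) (i.2 : ℕ), w m⟫_ℂ‖) ^ 2) = ⊤ := by
  
  refine ⟨lam_summable p hp, op_summable p hp w, fun T hT => part_c p w T hT,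
    not_summable_F p w, ?_⟩
  by_contra htop
  apply not_summable_F p w
  have h1 := ENNReal.summable_toReal htop
  apply h1.congr
  intro i
  rw [ENNReal.toReal_ofReal (F_nonneg p w i)]
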